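/- A ring R is feckly clean if and only if for any a ∈ R there exists e ∈ R such that every maximal ideal containing a contains e, every maximal ideal containing 1-a contains 1-e, and eR(1-e) ⊆ J(R). -/

import Mathlib

def IsMaxTwoSided {R : Type*} [Ring R] (P : TwoSidedIdeal R) : Prop :=
  P ≠ ⊤ ∧ ∀ Q : TwoSidedIdeal R, P < Q → Q = ⊤

def InJac {R : Type*} [Ring R] (x : R) : Prop := x ∈ Ideal.jacobson (⊥ : Ideal R)

def IsFullElem {R : Type*} [Ring R] (u : R) : Prop := TwoSidedIdeal.span ({u} : Set R) = ⊤

def FecklyCleanElem {R : Type*} [Ring R] (a : R) : Prop :=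
  ∃ e u : R, a = e + u ∧ IsFullElem u ∧ ∀ r : R, InJac (e * r * (1 - e))

def FecklyCleanRing (R : Type*) [Ring R] : Prop := ∀ a : R, FecklyCleanElem a

section aux

variable {R : Type*} [Ring R]

lemma injac_mul_right {x : R} (hx : InJac x) (r : R) : InJac (x * r) :=
  Ideal.mul_mem_right r _ hx

lemma injac_mul_left (r : R) {x : R} (hx : InJac x) : InJac (r * x) :=
  Ideal.mul_mem_left _ r hx

lemma injac_left_inv {x : R} (hx : InJac x) : ∃ z : R, z * (1 - x) = 1 := by
  obtain ⟨z, hz⟩ := Ideal.mem_jacobson_iff.1 hx (-1)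
  rw [Ideal.mem_bot] at hz
  refine ⟨z, ?_⟩
  have e : z * (1 - x) = z * -1 * x + z := by noncomm_ring
  rw [e, ← sub_eq_zero]
  exact hz

lemma injac_isUnit_one_sub {x : R} (hx : InJac x) : IsUnit (1 - x) := by
  obtain ⟨z, hz⟩ := injac_left_inv hx
  have hzx : InJac (-(z * x)) := neg_mem (injac_mul_left z hx)
  obtain ⟨w, hw⟩ := injac_left_inv hzx
  have hz1 : (1 : R) - -(z * x) = z := by
    have h' : z - z * x = 1 := by rw [← hz]; noncomm_ring
    rw [sub_neg_eq_add, ← h']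
    abel
  rw [hz1] at hw
  have hweq : w = 1 - x := by
    calc w = w * (z * (1 - x)) := by rw [hz, mul_one]
    _ = (w * z) * (1 - x) := by rw [mul_assoc]
    _ = 1 - x := by rw [hw, one_mul]
  exact ⟨⟨1 - x, z, by rw [← hweq]; exact hw, hz⟩, rfl⟩

/-- The Jacobson radical is contained in any maximal two-sided ideal. -/
lemma injac_mem_max {P : TwoSidedIdeal R} (hP : IsMaxTwoSided P) {x : R} (hx : InJac x) :
    x ∈ P := by
  by_cases hxP : x ∈ P
  · exact hxP
  · exfalso
    -- Q = P + J as a two-sided ideal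
    set Q : TwoSidedIdeal R := TwoSidedIdeal.mk' {y | ∃ j : R, InJac j ∧ y - j ∈ P}
      ⟨0, by simp [InJac], by simpa using P.zero_mem⟩
      (fun {a b} ⟨j, hj, hajP⟩ ⟨k, hk, hbkP⟩ =>
        ⟨j + k, add_mem hj hk, by
          have := P.add_mem hajP hbkP
          convert this using 1; noncomm_ring⟩)
      (fun {a} ⟨j, hj, hajP⟩ => ⟨-j, neg_mem hj, by
        have := P.neg_mem hajP
        convert this using 1; noncomm_ring⟩)
      (fun {r a} ⟨j, hj, hajP⟩ => ⟨r * j, injac_mul_left r hj, by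
        have := P.mul_mem_left r _ hajP
        convert this using 1; noncomm_ring⟩)
      (fun {a r} ⟨j, hj, hajP⟩ => ⟨j * r, injac_mul_right hj r, by
        have := P.mul_mem_right _ r hajP
        convert this using 1; noncomm_ring⟩) with hQdef
    have hPQ : P < Q := by
      constructor
      · intro y hy
        simp only [hQdef, SetLike.mem_coe, TwoSidedIdeal.mem_mk']
        exact ⟨0, by simp [InJac], by simpa using hy⟩
      · intro hle
        apply hxP
        have : x ∈ Q := by
          simp only [hQdef, SetLike.mem_coe, TwoSidedIdeal.mem_mk']
          exact ⟨x, hx, by simpa using P.zero_mem⟩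
        exact hle this
    have hQtop := hP.2 Q hPQ
    have h1 : (1 : R) ∈ Q := hQtop ▸ TwoSidedIdeal.mem_top _
    simp only [hQdef, SetLike.mem_coe, TwoSidedIdeal.mem_mk'] at h1
    obtain ⟨j, hj, hjP⟩ := h1
    have hu : IsUnit (1 - j) := injac_isUnit_one_sub hj
    obtain ⟨v, hv⟩ := hu
    have : (1 : R) ∈ P := by
      have := P.mul_mem_left (↑v⁻¹) _ hjP
      rwa [← hv, Units.inv_mul] at this
    exact hP.1 ((TwoSidedIdeal.one_mem_iff P).1 this)

/-- Every proper two-sided ideal is contained in a maximal one. -/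
lemma exists_max_twoSided (I : TwoSidedIdeal R) (hI : (1 : R) ∉ I) :
    ∃ P : TwoSidedIdeal R, IsMaxTwoSided P ∧ I ≤ P := by
  obtain ⟨m, him, hm⟩ := zorn_le_nonempty₀ {Q : TwoSidedIdeal R | (1 : R) ∉ Q}
    (fun c hcs hc y hy => by
      -- upper bound: union of the chain
      refine ⟨TwoSidedIdeal.mk' (⋃ Q ∈ c, (Q : Set R))
        ?_ ?_ ?_ ?_ ?_, ?_, ?_⟩
      · exact Set.mem_biUnion hy y.zero_mem
      · rintro a b ha hb
        simp only [Set.mem_iUnion, SetLike.mem_coe] at ha hb ⊢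
        obtain ⟨Qa, hQa, haa⟩ := ha
        obtain ⟨Qb, hQb, hbb⟩ := hb
        rcases hc.total hQa hQb with h | h
        · exact ⟨Qb, hQb, Qb.add_mem (h haa) hbb⟩
        · exact ⟨Qa, hQa, Qa.add_mem haa (h hbb)⟩
      · rintro a ha
        simp only [Set.mem_iUnion, SetLike.mem_coe] at ha ⊢
        obtain ⟨Qa, hQa, haa⟩ := ha
        exact ⟨Qa, hQa, Qa.neg_mem haa⟩
      · rintro r a ha
        simp only [Set.mem_iUnion, SetLike.mem_coe] at ha ⊢
        obtain ⟨Qa, hQa, haa⟩ := ha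
        exact ⟨Qa, hQa, Qa.mul_mem_left _ _ haa⟩
      · rintro a r ha
        simp only [Set.mem_iUnion, SetLike.mem_coe] at ha ⊢
        obtain ⟨Qa, hQa, haa⟩ := ha
        exact ⟨Qa, hQa, Qa.mul_mem_right _ _ haa⟩
      · intro h1
        rw [TwoSidedIdeal.mem_mk'] at h1
        simp only [Set.mem_iUnion, SetLike.mem_coe] at h1
        obtain ⟨Q, hQ, h1Q⟩ := h1
        exact hcs hQ h1Q
      · intro z hz w hw
        rw [TwoSidedIdeal.mem_mk']
        exact Set.mem_biUnion hz hw) I hI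
  refine ⟨m, ⟨?_, ?_⟩, him⟩
  · intro h
    exact hm.prop (h ▸ TwoSidedIdeal.mem_top _)
  · intro Q hQ
    by_contra hQtop
    have h1Q : (1 : R) ∉ Q := fun h => hQtop ((TwoSidedIdeal.one_mem_iff Q).1 h)
    exact absurd (hm.2 h1Q hQ.le) (not_le_of_gt hQ)

/-- Dichotomy in a maximal two-sided ideal for a "quasi-central" element. -/
lemma max_dichotomy {P : TwoSidedIdeal R} (hP : IsMaxTwoSided P) {e : R}
    (hJ : ∀ r : R, InJac (e * r * (1 - e))) : e ∈ P ∨ (1 - e) ∈ P := by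
  by_cases heP : e ∈ P
  · exact Or.inl heP
  · right
    set T : TwoSidedIdeal R := TwoSidedIdeal.mk' {x | x * (1 - e) ∈ P}
      (by simp)
      (fun {a b} ha hb => by
        have := P.add_mem ha hb
        simpa [add_mul] using this)
      (fun {a} ha => by
        have := P.neg_mem ha
        simpa [neg_mul] using this)
      (fun {r a} ha => by
        have := P.mul_mem_left r _ ha
        simpa [mul_assoc] using this)
      (fun {a r} ha => by
        show a * r * (1 - e) ∈ P
        have key : a * r * (1 - e)
            = a * (1 - e) * (r * (1 - e)) + a * (e * r * (1 - e)) := by noncomm_ring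
        rw [key]
        exact P.add_mem (P.mul_mem_right _ _ ha)
          (P.mul_mem_left _ _ (injac_mem_max hP (hJ r)))) with hTdef
    have hPT : P < T := by
      constructor
      · intro y hy
        simp only [hTdef, SetLike.mem_coe, TwoSidedIdeal.mem_mk']
        exact P.mul_mem_right _ _ hy
      · intro hle
        apply heP
        have heT : e ∈ T := by
          simp only [hTdef, SetLike.mem_coe, TwoSidedIdeal.mem_mk']
          show e * (1 - e) ∈ P
          have : e * (1 - e) = e * 1 * (1 - e) := by noncomm_ring
          rw [this]
          exact injac_mem_max hP (hJ 1)
        exact hle heT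
    have hTtop := hP.2 T hPT
    have h1 : (1 : R) ∈ T := hTtop ▸ TwoSidedIdeal.mem_top _
    simp only [hTdef, SetLike.mem_coe, TwoSidedIdeal.mem_mk'] at h1
    simpa using h1

end aux

theorem stmt5 {R : Type*} [Ring R] :
    FecklyCleanRing R ↔ ∀ a : R, ∃ e : R,
      (∀ P : TwoSidedIdeal R, IsMaxTwoSided P → a ∈ P → e ∈ P) ∧
      (∀ P : TwoSidedIdeal R, IsMaxTwoSided P → 1 - a ∈ P → 1 - e ∈ P) ∧
      (∀ r : R, InJac (e * r * (1 - e))) := by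
  constructor
  · intro h a
    obtain ⟨f, v, hsum, hv, hJ⟩ := h (1 - a)
    have hveq : v = 1 - a - f := by rw [hsum]; abel
    refine ⟨f, ?_, ?_, hJ⟩
    · -- a ∈ P → f ∈ P
      intro P hP haP
      set T : TwoSidedIdeal R := TwoSidedIdeal.mk' {x | f * x ∈ P}
        (by simp)
        (fun {x y} hx hy => by
          have := P.add_mem hx hy; simpa [mul_add] using this)
        (fun {x} hx => by
          have := P.neg_mem hx; simpa [mul_neg] using this)
        (fun {r x} hx => by
          show f * (r * x) ∈ P
          have key : f * (r * x) = f * r * (1 - f) * x + f * (r * (f * x)) := by noncomm_ring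
          rw [key]
          exact P.add_mem
            (injac_mem_max hP (injac_mul_right (hJ r) x))
            (P.mul_mem_left _ _ (P.mul_mem_left _ _ hx)))
        (fun {x r} hx => by
          show f * (x * r) ∈ P
          have : f * (x * r) = f * x * r := by noncomm_ring
          rw [this]
          exact P.mul_mem_right _ _ hx) with hTdef
      have hvT : v ∈ T := by
        simp only [hTdef, SetLike.mem_coe, TwoSidedIdeal.mem_mk']
        show f * v ∈ P
        have key : f * v = f * 1 * (1 - f) - f * a := by rw [hveq]; noncomm_ring
        rw [key]
        exact P.sub_mem (injac_mem_max hP (hJ 1)) (P.mul_mem_left _ _ haP)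
      have h1T : (1 : R) ∈ T := by
        have : TwoSidedIdeal.span ({v} : Set R) ≤ T := by
          intro x hx
          rw [TwoSidedIdeal.mem_span_iff] at hx
          exact hx T (by simpa using hvT)
        rw [hv] at this
        exact this (TwoSidedIdeal.mem_top _)
      simp only [hTdef, SetLike.mem_coe, TwoSidedIdeal.mem_mk'] at h1T
      simpa using h1T
    · -- 1 - a ∈ P → 1 - f ∈ P
      intro P hP haP
      set T : TwoSidedIdeal R := TwoSidedIdeal.mk' {x | x * (1 - f) ∈ P}
        (by simp)
        (fun {x y} hx hy => by
          have := P.add_mem hx hy; simpa [add_mul] using this)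
        (fun {x} hx => by
          have := P.neg_mem hx; simpa [neg_mul] using this)
        (fun {r x} hx => by
          have := P.mul_mem_left r _ hx; simpa [mul_assoc] using this)
        (fun {x r} hx => by
          show x * r * (1 - f) ∈ P
          have key : x * r * (1 - f)
              = x * (1 - f) * (r * (1 - f)) + x * (f * r * (1 - f)) := by noncomm_ring
          rw [key]
          exact P.add_mem (P.mul_mem_right _ _ hx)
            (P.mul_mem_left _ _ (injac_mem_max hP (hJ r)))) with hTdef
      have hvT : v ∈ T := by
        simp only [hTdef, SetLike.mem_coe, TwoSidedIdeal.mem_mk']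
        show v * (1 - f) ∈ P
        have key : v * (1 - f) = (1 - a) * (1 - f) - f * 1 * (1 - f) := by rw [hveq]; noncomm_ring
        rw [key]
        exact P.sub_mem (P.mul_mem_right _ _ haP) (injac_mem_max hP (hJ 1))
      have h1T : (1 : R) ∈ T := by
        have : TwoSidedIdeal.span ({v} : Set R) ≤ T := by
          intro x hx
          rw [TwoSidedIdeal.mem_span_iff] at hx
          exact hx T (by simpa using hvT)
        rw [hv] at this
        exact this (TwoSidedIdeal.mem_top _)
      simp only [hTdef, SetLike.mem_coe, TwoSidedIdeal.mem_mk'] at h1T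
      simpa using h1T
  · intro h a
    obtain ⟨f, h1, h2, hJ⟩ := h (1 - a)
    refine ⟨f, a - f, by abel, ?_, hJ⟩
    by_contra hfull
    have h1span : (1 : R) ∉ TwoSidedIdeal.span ({a - f} : Set R) := by
      intro hmem
      exact hfull ((TwoSidedIdeal.one_mem_iff _).1 hmem)
    obtain ⟨P, hPmax, hle⟩ := exists_max_twoSided _ h1span
    have huP : a - f ∈ P := hle (TwoSidedIdeal.subset_span (by simp))
    rcases max_dichotomy hPmax hJ with hfP | hfP
    · have haP : a ∈ P := by
        have := P.add_mem huP hfP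
        simpa using this
      have h1a : 1 - (1 - a) ∈ P := by simpa using haP
      have := h2 P hPmax h1a
      have h1P : (1 : R) ∈ P := by
        have := P.add_mem hfP this
        simpa using this
      exact hPmax.1 ((TwoSidedIdeal.one_mem_iff P).1 h1P)
    · have haP : 1 - a ∈ P := by
        have := P.sub_mem hfP huP
        have e : (1 : R) - f - (a - f) = 1 - a := by noncomm_ring
        rwa [e] at this
      have := h1 P hPmax haP
      have h1P : (1 : R) ∈ P := by
        have := P.add_mem hfP this
        simpa using this
      exact hPmax.1 ((TwoSidedIdeal.one_mem_iff P).1 h1P)
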